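/- Let R be a commutative ring of prime characteristic p, x ∈ R, and M an R-module with an additive map κ : M → M satisfying κ(r^p m) = r κ(m). Equip the localization M_x with the map κ(m/s) = κ(m s^{p-1})/s. Then this map is well-defined (independent of the chosen fraction representation when x is a nonzerodivisor on M, or in general well-defined on the localization) and again satisfies κ((a)^p · μ) = a · κ(μ) for all a ∈ R_x and μ ∈ M_x. -/
import Mathlib


/-- The Cartier structure `κ(m/s) = κ(s^{p-1} m)/s` on the localization `M_x` is
well defined, additive, and `p⁻¹`-semilinear over `R_x`. -/
theorem stmt_2 {R M : Type*} [CommRing R] [AddCommGroup M] [Module R M]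
    (p : ℕ) (hp : p.Prime) (hchar : (p : R) = 0) (x : R)
    (κ : M → M) (hadd : ∀ a b : M, κ (a + b) = κ a + κ b)
    (hsemi : ∀ (r : R) (m : M), κ (r ^ p • m) = r • κ m) :
    ∃ κ' : LocalizedModule (Submonoid.powers x) M → LocalizedModule (Submonoid.powers x) M,
      (∀ a b, κ' (a + b) = κ' a + κ' b) ∧
      (∀ (m : M) (s : Submonoid.powers x),
        κ' (LocalizedModule.mk m s) = LocalizedModule.mk (κ ((s : R) ^ (p - 1) • m)) s) ∧
      (∀ (a : Localization (Submonoid.powers x))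
        (μ : LocalizedModule (Submonoid.powers x) M),
        κ' (a ^ p • μ) = a • κ' μ) := by
  obtain ⟨q, hq⟩ : ∃ q, p = q + 1 := ⟨p - 1, (Nat.succ_pred_eq_of_pos hp.pos).symm⟩
  subst hq
  simp only [Nat.add_sub_cancel]
  set S := Submonoid.powers x
  -- the underlying function on pairs
  set f : M × S → LocalizedModule S M :=
    fun y => LocalizedModule.mk (κ ((y.2 : R) ^ q • y.1)) y.2 with hf
  have wd : ∀ (y y' : M × S), y ≈ y' → f y = f y' := by
    rintro ⟨m, s⟩ ⟨m', s'⟩ ⟨u, hu⟩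
    simp only [hf]
    rw [LocalizedModule.mk_eq]
    refine ⟨u * (u * s * s') ^ q, ?_⟩
    simp only [Submonoid.smul_def, Submonoid.coe_mul, SubmonoidClass.coe_pow, smul_smul] at hu ⊢
    calc ((u : R) * ((u : R) * (s : R) * (s' : R)) ^ q * (s' : R)) • κ ((s : R) ^ q • m)
        = ((s : R) ^ q * (s' : R) ^ q * (u : R) ^ q) •
            (((u : R) * s') • κ ((s : R) ^ q • m)) := by
          rw [smul_smul]; ring_nf
      _ = ((s : R) ^ q * (s' : R) ^ q * (u : R) ^ q) •
            κ (((u : R) * s') ^ (q + 1) • (s : R) ^ q • m) := by rw [hsemi]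
      _ = ((s : R) ^ q * (s' : R) ^ q * (u : R) ^ q) •
            κ (((u : R) * s) ^ (q + 1) • (s' : R) ^ q • m') := by
          congr 2
          rw [smul_smul, smul_smul,
            show ((u : R) * s') ^ (q + 1) * (s : R) ^ q
              = (((u : R) * s') ^ q * (s : R) ^ q) * ((u : R) * s') by ring,
            show ((u : R) * s) ^ (q + 1) * (s' : R) ^ q
              = (((u : R) * s') ^ q * (s : R) ^ q) * ((u : R) * s) by ring,
            mul_smul, mul_smul, hu, smul_smul, smul_smul]
      _ = ((s : R) ^ q * (s' : R) ^ q * (u : R) ^ q) •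
            (((u : R) * s) • κ ((s' : R) ^ q • m')) := by rw [hsemi]
      _ = ((u : R) * ((u : R) * (s : R) * (s' : R)) ^ q * (s : R)) • κ ((s' : R) ^ q • m') := by
          rw [smul_smul]; ring_nf
  refine ⟨fun μ => μ.liftOn f wd, ?_, ?_, ?_⟩
  · -- additivity
    intro a b
    induction a, b using LocalizedModule.induction_on₂ with
    | _ m n s t =>
      rw [LocalizedModule.mk_add_mk]
      simp only [LocalizedModule.liftOn_mk, hf]
      rw [LocalizedModule.mk_add_mk]
      congr 1
      simp only [Submonoid.smul_def, Submonoid.coe_mul, smul_smul, smul_add]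
      rw [hadd]
      congr 1
      · rw [show ((s : R) * t) ^ q * (t : R) = (t : R) ^ (q + 1) * (s : R) ^ q by ring,
          mul_smul, hsemi]
      · rw [show ((s : R) * t) ^ q * (s : R) = (s : R) ^ (q + 1) * (t : R) ^ q by ring,
          mul_smul, hsemi]
  · -- value on mk
    intro m s
    exact LocalizedModule.liftOn_mk wd m s
  · -- semilinearity
    intro a μ
    induction μ using LocalizedModule.induction_on with
    | _ m s =>
      induction a using Localization.induction_on with
      | _ y =>
        obtain ⟨r, t⟩ := y
        dsimp only
        rw [Localization.mk_pow, LocalizedModule.mk_smul_mk, LocalizedModule.liftOn_mk wd,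
          LocalizedModule.liftOn_mk wd, LocalizedModule.mk_smul_mk]
        simp only [hf]
        rw [LocalizedModule.mk_eq]
        refine ⟨1, ?_⟩
        simp only [one_smul, Submonoid.smul_def, Submonoid.coe_mul, SubmonoidClass.coe_pow, smul_smul]
        rw [show ((t : R) ^ (q + 1) * s) ^ q * r ^ (q + 1)
            = (r * (t : R) ^ q) ^ (q + 1) * (s : R) ^ q by ring,
          mul_smul ((r * (t : R) ^ q) ^ (q + 1)) ((s : R) ^ q) m, hsemi, smul_smul]
        ring_nf
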